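/- Let σ = [p₀,…,p_k] be a non-degenerate k-simplex in ℝ^m and P the m × k matrix with columns pᵢ − p₀. If there is a vertex pᵢ with i ≠ 0 whose altitude D(pᵢ,σ) is minimal among all altitudes of σ, then the smallest singular value satisfies s_k(P) ≤ k · t(σ) · L(σ). -/

import Mathlib

open Matrix Metric
open scoped Classical BigOperators

noncomputable section

/-- Euclidean space ℝ^m. -/
abbrev E (m : ℕ) := EuclideanSpace ℝ (Fin m)

/-- Euclidean norm of a plain vector. -/
noncomputable def euclNorm {n : ℕ} (v : Fin n → ℝ) : ℝ := Real.sqrt (∑ i, v i ^ 2)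

/-- Largest singular value (operator norm) of a matrix. -/
noncomputable def largeSV {m k : ℕ} (P : Matrix (Fin m) (Fin k) ℝ) : ℝ :=
  ⨆ x : {x : Fin k → ℝ // euclNorm x = 1}, euclNorm (P.mulVec x)

/-- Smallest singular value of a matrix. -/
noncomputable def smallSV {m k : ℕ} (P : Matrix (Fin m) (Fin k) ℝ) : ℝ :=
  ⨅ x : {x : Fin k → ℝ // euclNorm x = 1}, euclNorm (P.mulVec x)

/-- Matrix of edge vectors pᵢ − p₀ of a k-simplex. -/
noncomputable def vertMatrix {m k : ℕ} (p : Fin (k+1) → E m) : Matrix (Fin m) (Fin k) ℝ :=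
  fun a j => p j.succ a - p 0 a

/-- Pseudo-inverse (PᵀP)⁻¹Pᵀ of a matrix of full column rank. -/
noncomputable def pseudoInv {m k : ℕ} (P : Matrix (Fin m) (Fin k) ℝ) :
    Matrix (Fin k) (Fin m) ℝ := (Pᵀ * P)⁻¹ * Pᵀ

/-- Longest edge length of a simplex given by its vertices. -/
noncomputable def longEdge {m k : ℕ} (p : Fin (k+1) → E m) : ℝ :=
  ⨆ i, ⨆ j, dist (p i) (p j)

/-- Altitude of vertex i: distance to affine hull of the opposite facet. -/
noncomputable def altitude {m k : ℕ} (p : Fin (k+1) → E m) (i : Fin (k+1)) : ℝ :=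
  Metric.infDist (p i) (↑(affineSpan ℝ (p '' {j | j ≠ i})) : Set (E m))

/-- Thickness of a k-simplex: 1 if k = 0, else min altitude / (k · longest edge). -/
noncomputable def thickness {m k : ℕ} (p : Fin (k+1) → E m) : ℝ :=
  if k = 0 then 1 else (⨅ i, altitude p i) / (k * longEdge p)

/-- Longest edge of a finite vertex set. -/
noncomputable def fLongEdge {m : ℕ} (s : Finset (E m)) : ℝ := Metric.diam (s : Set (E m))

/-- Minimal altitude of a finite vertex set. -/
noncomputable def fMinAlt {m : ℕ} (s : Finset (E m)) : ℝ :=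
  ⨅ p : {p // p ∈ s},
    Metric.infDist (p : E m) (↑(affineSpan ℝ ((s.erase (p : E m)) : Set (E m))) : Set (E m))

/-- Thickness of a simplex given as a finite vertex set. -/
noncomputable def fThickness {m : ℕ} (s : Finset (E m)) : ℝ :=
  if s.card ≤ 1 then 1 else fMinAlt s / ((s.card - 1 : ℕ) * fLongEdge s)

/-- A simplex (finite vertex set) is Γ₀-good if every j-face has thickness ≥ Γ₀^j. -/
def isGood {m : ℕ} (Γ₀ : ℝ) (s : Finset (E m)) : Prop :=
  ∀ t ⊆ s, t.Nonempty → fThickness t ≥ Γ₀ ^ (t.card - 1)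

/-- A Γ₀-flake: not Γ₀-good, but every facet is Γ₀-good. -/
def isFlake {m : ℕ} (Γ₀ : ℝ) (s : Finset (E m)) : Prop :=
  ¬ isGood Γ₀ s ∧ ∀ p ∈ s, isGood Γ₀ (s.erase p)

-- auxiliary lemmas

lemma euclNorm_nonneg {n : ℕ} (v : Fin n → ℝ) : 0 ≤ euclNorm v := Real.sqrt_nonneg _

lemma abs_le_euclNorm {n : ℕ} (v : Fin n → ℝ) (j : Fin n) : |v j| ≤ euclNorm v := by
  rw [← Real.sqrt_sq_eq_abs]
  exact Real.sqrt_le_sqrt (Finset.single_le_sum (f := fun i => v i ^ 2)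
    (fun i _ => sq_nonneg _) (Finset.mem_univ j))

lemma euclNorm_smul {n : ℕ} (c : ℝ) (v : Fin n → ℝ) :
    euclNorm (c • v) = |c| * euclNorm v := by
  unfold euclNorm
  rw [← Real.sqrt_sq_eq_abs, ← Real.sqrt_mul (sq_nonneg c), Finset.mul_sum]
  congr 1
  refine Finset.sum_congr rfl fun i _ => ?_
  simp [mul_pow]

lemma smallSV_le_of_one_le {m k : ℕ} (P : Matrix (Fin m) (Fin k) ℝ)
    (x : Fin k → ℝ) (hx : 1 ≤ euclNorm x) :
    smallSV P ≤ euclNorm (P.mulVec x) := by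
  have hxpos : 0 < euclNorm x := lt_of_lt_of_le one_pos hx
  set c : ℝ := (euclNorm x)⁻¹ with hc
  have hcpos : 0 < c := inv_pos.2 hxpos
  have hunit : euclNorm (c • x) = 1 := by
    rw [euclNorm_smul, abs_of_pos hcpos, hc, inv_mul_cancel₀ (ne_of_gt hxpos)]
  have hbdd : BddBelow (Set.range fun y : {x : Fin k → ℝ // euclNorm x = 1} =>
      euclNorm (P.mulVec (y : Fin k → ℝ))) := by
    refine ⟨0, ?_⟩
    rintro r ⟨y, rfl⟩
    exact euclNorm_nonneg _
  have h1 : smallSV P ≤ euclNorm (P.mulVec (c • x)) :=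
    ciInf_le hbdd (⟨c • x, hunit⟩ : {x : Fin k → ℝ // euclNorm x = 1})
  refine h1.trans ?_
  rw [Matrix.mulVec_smul, euclNorm_smul, abs_of_pos hcpos]
  calc c * euclNorm (P.mulVec x) ≤ 1 * euclNorm (P.mulVec x) := by
        apply mul_le_mul_of_nonneg_right _ (euclNorm_nonneg _)
        rw [hc]
        exact inv_le_one_of_one_le₀ hx
    _ = euclNorm (P.mulVec x) := one_mul _

/-- Upper bound on the smallest singular value when a vertex other than p₀
realises the minimal altitude. -/
theorem stmt1 {m k : ℕ} (hk : 0 < k) (p : Fin (k+1) → E m)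
    (hnd : 0 < thickness p)
    (i : Fin (k+1)) (hi : i ≠ 0) (hmin : ∀ j, altitude p i ≤ altitude p j) :
    smallSV (vertMatrix p) ≤ k * thickness p * longEdge p := by
  -- Step 1: smallSV ≤ altitude p i
  have key : smallSV (vertMatrix p) ≤ altitude p i := by
    have hne : (↑(affineSpan ℝ (p '' {j | j ≠ i})) : Set (E m)).Nonempty := by
      refine ⟨p 0, subset_affineSpan ℝ _ ⟨0, ?_, rfl⟩⟩
      exact Ne.symm hi
    by_contra hlt
    push_neg at hlt
    rw [altitude] at hlt
    obtain ⟨q, hq, hdq⟩ := (Metric.infDist_lt_iff hne).1 hlt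
    -- q in the affine span; get affine combination
    have hq' : q ∈ affineSpan ℝ (Set.range fun j : {j : Fin (k+1) // j ≠ i} => p j) := by
      rwa [Set.image_eq_range] at hq
    obtain ⟨s, w, hw, hqc⟩ := eq_affineCombination_of_mem_affineSpan hq'
    have hqe : q = (∑ j ∈ s, w j • (p (j : {j : Fin (k+1) // j ≠ i}).val - p 0)) + p 0 := by
      rw [hqc, Finset.affineCombination_eq_weightedVSubOfPoint_vadd_of_sum_eq_one s w _ hw (p 0),
        Finset.weightedVSubOfPoint_apply]
      simp [vsub_eq_sub, vadd_eq_add]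
    set W : Fin (k+1) → ℝ := fun t => ∑ j ∈ s, if (j : {j : Fin (k+1) // j ≠ i}).val = t then w j else 0 with hW
    set x : Fin k → ℝ := fun l => (if l.succ = i then 1 else 0) - W l.succ with hxdef
    set j0 : Fin k := i.pred hi with hj0
    have hj0s : j0.succ = i := Fin.succ_pred i hi
    have hWi : W i = 0 := by
      rw [hW]
      refine Finset.sum_eq_zero fun j _ => if_neg j.property
    have hxj0 : x j0 = 1 := by
      rw [hxdef]
      simp [hj0s, hWi]
    have hx1 : 1 ≤ euclNorm x := by
      have := abs_le_euclNorm x j0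
      rwa [hxj0, abs_one] at this
    -- coordinate computation
    have hPx : ∀ a : Fin m, (vertMatrix p).mulVec x a = p i a - q a := by
      intro a
      set v : Fin (k+1) → ℝ := fun t => p t a - p 0 a with hv
      have hv0 : v 0 = 0 := by simp [hv]
      have hqa : q a = (∑ j ∈ s, w j * v (j : {j : Fin (k+1) // j ≠ i}).val) + p 0 a := by
        rw [hqe]
        have : ((∑ j ∈ s, w j • (p (j : {j : Fin (k+1) // j ≠ i}).val - p 0)) + p 0) a
            = (∑ j ∈ s, w j • (p (j : {j : Fin (k+1) // j ≠ i}).val - p 0)) a + p 0 a := rfl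
        rw [this]
        congr 1
        have : (∑ j ∈ s, w j • (p (j : {j : Fin (k+1) // j ≠ i}).val - p 0)) a
            = ∑ j ∈ s, (w j • (p (j : {j : Fin (k+1) // j ≠ i}).val - p 0)) a := by
          rw [WithLp.ofLp_sum, Finset.sum_apply]
        rw [this]
        refine Finset.sum_congr rfl fun j _ => ?_
        rw [PiLp.smul_apply, PiLp.sub_apply]
        simp [hv, smul_eq_mul]
      -- regroup: ∑ j ∈ s, w j * v j.val = ∑ t, W t * v t
      have hgroup : (∑ j ∈ s, w j * v (j : {j : Fin (k+1) // j ≠ i}).val)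
          = ∑ t : Fin (k+1), W t * v t := by
        rw [hW]
        simp only [Finset.sum_mul]
        rw [Finset.sum_comm]
        refine Finset.sum_congr rfl fun j _ => ?_
        rw [Finset.sum_congr rfl (fun t _ => by rw [ite_mul, zero_mul] :
          ∀ t ∈ Finset.univ, (if (j : {j : Fin (k+1) // j ≠ i}).val = t then w j else 0) * v t
            = if (j : {j : Fin (k+1) // j ≠ i}).val = t then w j * v t else 0)]
        rw [Finset.sum_ite_eq Finset.univ (j : {j : Fin (k+1) // j ≠ i}).val (fun t => w j * v t)]
        simp
      have hmv : (vertMatrix p).mulVec x a = ∑ l : Fin k, v l.succ * x l := by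
        rw [Matrix.mulVec]
        simp only [dotProduct, vertMatrix, hv]
      rw [hmv, hqa, hgroup]
      have hsplit : ∑ t : Fin (k+1), W t * v t = ∑ l : Fin k, W l.succ * v l.succ := by
        rw [Fin.sum_univ_succ, hv0, mul_zero, zero_add]
      rw [hsplit]
      have : ∑ l : Fin k, v l.succ * x l
          = (∑ l : Fin k, if l.succ = i then v l.succ else 0) - ∑ l : Fin k, W l.succ * v l.succ := by
        rw [← Finset.sum_sub_distrib]
        refine Finset.sum_congr rfl fun l _ => ?_
        rw [hxdef]
        by_cases h : l.succ = i <;> simp [h] <;> ring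
      rw [this]
      have : (∑ l : Fin k, if l.succ = i then v l.succ else 0) = v i := by
        have hcond : ∀ l : Fin k, (l.succ = i) = (l = j0) := by
          intro l
          rw [← hj0s]
          simp [Fin.succ_inj]
        calc (∑ l : Fin k, if l.succ = i then v l.succ else 0)
            = ∑ l : Fin k, if l = j0 then v l.succ else 0 := by
              refine Finset.sum_congr rfl fun l _ => ?_
              by_cases h : l = j0
              · subst h; rw [if_pos hj0s, if_pos rfl]
              · rw [if_neg, if_neg h]
                intro hs
                exact h (Fin.succ_injective _ (by rw [hs, hj0s]))
          _ = v j0.succ := by rw [Finset.sum_ite_eq' Finset.univ j0 (fun l => v l.succ)]; simp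
          _ = v i := by rw [hj0s]
      rw [this, hv]
      ring
    -- conclude: dist (p i) q = euclNorm (mulVec x)
    have hdist : dist (p i) q = euclNorm ((vertMatrix p).mulVec x) := by
      rw [EuclideanSpace.dist_eq, euclNorm]
      congr 1
      refine Finset.sum_congr rfl fun a _ => ?_
      rw [hPx a, Real.dist_eq]
      rw [sq_abs]
    have := smallSV_le_of_one_le (vertMatrix p) x hx1
    rw [← hdist] at this
    exact absurd (lt_of_le_of_lt this hdq) (lt_irrefl _)
  -- Step 2: arithmetic
  have hk0 : (k : ℝ) ≠ 0 := Nat.cast_ne_zero.2 hk.ne'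
  have hL0 : 0 ≤ longEdge p := by
    have hbdd1 : BddAbove (Set.range fun j => dist (p 0) (p j)) := Set.Finite.bddAbove (Set.finite_range _)
    have hbdd2 : BddAbove (Set.range fun i => ⨆ j, dist (p i) (p j)) := Set.Finite.bddAbove (Set.finite_range _)
    calc (0:ℝ) = dist (p 0) (p 0) := (dist_self _).symm
      _ ≤ ⨆ j, dist (p 0) (p j) := le_ciSup hbdd1 0
      _ ≤ longEdge p := le_ciSup hbdd2 0
  have hkne : k ≠ 0 := hk.ne'
  have hth : thickness p = (⨅ j, altitude p j) / (k * longEdge p) := by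
    rw [thickness, if_neg hkne]
  have hkL : 0 < (k : ℝ) * longEdge p := by
    rcases lt_or_eq_of_le (mul_nonneg (Nat.cast_nonneg k) hL0) with h | h
    · exact h
    · exfalso
      rw [hth, ← h, div_zero] at hnd
      exact lt_irrefl _ hnd
  have heq : (k : ℝ) * thickness p * longEdge p = ⨅ j, altitude p j := by
    rw [hth]
    field_simp
    rw [mul_div_cancel_right₀ _ (right_ne_zero_of_mul hkL.ne')]
  rw [heq]
  refine le_ciInf fun j => ?_
  exact key.trans (hmin j)
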